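/- Fix parameters ρ > η > 1 and s ∈ [0,1], and let ε(s) = (1−s)·ρ + s·η. Define for θ ∈ (0,1] and x ∈ (0,1) the oligopsony markdown elasticity Γ_os(x,θ) = (x·(1−x)^{1/θ−1}/(θ·(1−(1−x)^{1/θ})) − 1)·(1−x)·ε(s). Then: (i) if θ < 1, Γ_os(x,θ) < 0 for every x ∈ (0,1); and (ii) if θ = 1, Γ_os(x,1) = 0 for every x ∈ (0,1). -/

import Mathlib

/-- The oligopsony markdown elasticity
`Γ_os(x,θ) = (x·(1−x)^{1/θ−1}/(θ·(1−(1−x)^{1/θ})) − 1)·(1−x)·ε(s)` is strictly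
negative for `θ ∈ (0,1)` and `x ∈ (0,1)`, and identically zero when `θ = 1`. -/
theorem stmt12 (ρ η s : ℝ) (hη : 1 < η) (hρη : η < ρ) (hs : s ∈ Set.Icc (0:ℝ) 1) :
    let ε : ℝ := (1 - s) * ρ + s * η
    (∀ θ : ℝ, 0 < θ → θ < 1 → ∀ x ∈ Set.Ioo (0:ℝ) 1,
      (x * (1 - x) ^ (1 / θ - 1) / (θ * (1 - (1 - x) ^ (1 / θ))) - 1)
          * (1 - x) * ε < 0) ∧
    (∀ x ∈ Set.Ioo (0:ℝ) 1,
      (x * (1 - x) ^ (1 / (1:ℝ) - 1) / (1 * (1 - (1 - x) ^ (1 / (1:ℝ)))) - 1)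
          * (1 - x) * ε = 0) := by
  intro ε
  obtain ⟨hs0, hs1⟩ := hs
  have hε : 0 < ε := by
    show 0 < (1 - s) * ρ + s * η
    nlinarith [mul_nonneg (by linarith : (0:ℝ) ≤ 1 - s) (by linarith : (0:ℝ) ≤ ρ - η)]
  constructor
  · intro θ hθ0 hθ1 x hx
    obtain ⟨hx0, hx1⟩ := hx
    set y := 1 - x with hy
    have hy0 : 0 < y := by simp [hy]; linarith
    have hy1 : y < 1 := by simp [hy]; linarith
    set t := 1 / θ with ht
    have ht1 : 1 < t := one_lt_one_div hθ0 hθ1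
    have hyt1 : y ^ t < 1 := Real.rpow_lt_one hy0.le hy1 (by linarith)
    have hytpos : 0 < y ^ t := Real.rpow_pos_of_pos hy0 t
    have hden : 0 < θ * (1 - y ^ t) := mul_pos hθ0 (by linarith)
    -- Bernoulli
    have hz : (0:ℝ) < (1 - y) / y := div_pos (by linarith) hy0
    have hb := one_add_mul_self_lt_rpow_one_add (s := (1 - y) / y)
      (by linarith) (ne_of_gt hz) ht1
    have h1y : (1 + (1 - y) / y) = y⁻¹ := by field_simp; ring
    rw [h1y, Real.inv_rpow hy0.le] at hb
    -- hb : 1 + t * ((1-y)/y) < (y ^ t)⁻¹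
    have hmul := mul_lt_mul_of_pos_right hb hytpos
    rw [inv_mul_cancel₀ (ne_of_gt hytpos)] at hmul
    -- hmul : (1 + t * ((1-y)/y)) * y^t < 1
    have hsplit : y ^ (t - 1) = y ^ t / y := by
      rw [Real.rpow_sub hy0, Real.rpow_one]
    have key : t * (1 - y) * y ^ (t - 1) < 1 - y ^ t := by
      rw [hsplit]
      have : (1 + t * ((1 - y) / y)) * y ^ t = y ^ t + t * (1 - y) * (y ^ t / y) := by
        field_simp
      rw [this] at hmul
      linarith
    -- deduce x * y^(t-1) < θ * (1 - y^t)
    have hx' : x = 1 - y := by simp [hy]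
    have hθt : θ * t = 1 := by rw [ht, mul_one_div_cancel hθ0.ne']
    have key2 : x * y ^ (t - 1) < θ * (1 - y ^ t) := by
      have := mul_lt_mul_of_pos_left key hθ0
      calc x * y ^ (t - 1) = θ * (t * (1 - y) * y ^ (t - 1)) := by
            rw [hx']; nlinarith [hθt]
        _ < θ * (1 - y ^ t) := this
    have hfrac : x * y ^ (t - 1) / (θ * (1 - y ^ t)) - 1 < 0 := by
      rw [sub_neg]
      exact (div_lt_one hden).mpr key2
    have h := mul_neg_of_neg_of_pos hfrac (mul_pos hy0 hε)
    rw [← mul_assoc] at h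
    exact h
  · intro x hx
    obtain ⟨hx0, hx1⟩ := hx
    have h0 : (1:ℝ) / 1 - 1 = 0 := by norm_num
    have h1 : (1:ℝ) / 1 = 1 := by norm_num
    rw [h0, h1, Real.rpow_zero, Real.rpow_one]
    have : x * 1 / (1 * (1 - (1 - x))) - 1 = 0 := by
      rw [sub_sub_cancel, mul_one, one_mul, div_self hx0.ne', sub_self]
    rw [this, zero_mul, zero_mul]
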